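/- Every trajectory of the Chialvo map starting in the region Ê₁ = {(x,y) : k ≤ x ≤ û₁, y < ŵ₁} leaves Ê₁ after a finite number of iterations: for every (x,y) ∈ Ê₁ there exists n ≥ 1 such that fⁿ(x,y) ∉ Ê₁. -/

import Mathlib

private lemma sq_exp_neg_le (t : ℝ) (ht : 0 ≤ t) :
    t ^ 2 * Real.exp (-t) ≤ 4 * Real.exp (-2) := by
  have h1 : t / 2 ≤ Real.exp (t / 2 - 1) := by
    have := Real.add_one_le_exp (t / 2 - 1)
    linarith
  have h2 : (t / 2) ^ 2 ≤ (Real.exp (t / 2 - 1)) ^ 2 :=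
    pow_le_pow_left₀ (by linarith) h1 2
  have h3 : (Real.exp (t / 2 - 1)) ^ 2 = Real.exp (t - 2) := by
    rw [← Real.exp_nat_mul]; norm_num; ring_nf
  rw [h3] at h2
  have h4 : Real.exp (t - 2) = Real.exp t * Real.exp (-2) := by
    rw [← Real.exp_add]; ring_nf
  have h5 : t ^ 2 ≤ 4 * Real.exp t * Real.exp (-2) := by
    have he : (t / 2) ^ 2 = t ^ 2 / 4 := by ring
    rw [he, h4] at h2; linarith
  have h6 : 0 < Real.exp (-t) := Real.exp_pos _
  calc t ^ 2 * Real.exp (-t) ≤ (4 * Real.exp t * Real.exp (-2)) * Real.exp (-t) :=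
        mul_le_mul_of_nonneg_right h5 h6.le
    _ = 4 * Real.exp (-2) * (Real.exp t * Real.exp (-t)) := by ring
    _ = 4 * Real.exp (-2) := by rw [← Real.exp_add]; simp

/-- Every trajectory starting in region `Ê₁ = {k ≤ x ≤ û₁, y < ŵ₁}` leaves `Ê₁`
after a finite number of iterations. -/
theorem chialvo_escape_E1
    (a b c k : ℝ)
    (ha : a ∈ Set.Ioo (0:ℝ) 1) (hb : b ∈ Set.Ioo (0:ℝ) 1)
    (hc : c ∈ Set.Ioo (0:ℝ) 1) (hk : 0 < k)
    (f : ℝ × ℝ → ℝ × ℝ)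
    (hf : ∀ p : ℝ × ℝ,
      f p = (p.1 ^ 2 * Real.exp (p.2 - p.1) + k, a * p.2 - b * p.1 + c))
    (v u1 w1 : ℝ)
    (hv : v = (c - b * k) / (1 - a))
    (hu1 : u1 = 4 / Real.exp 2 * Real.exp v + k)
    (hw1 : w1 = (c - b * u1) / (1 - a))
    (E1 : Set (ℝ × ℝ))
    (hE1 : E1 = {p : ℝ × ℝ | k ≤ p.1 ∧ p.1 ≤ u1 ∧ p.2 < w1}) :
    ∀ p ∈ E1, ∃ n : ℕ, n ≥ 1 ∧ f^[n] p ∉ E1 := by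
  obtain ⟨ha0, ha1⟩ := ha
  obtain ⟨hb0, hb1⟩ := hb
  obtain ⟨hc0, hc1⟩ := hc
  have h1a : (0:ℝ) < 1 - a := by linarith
  intro p hp
  by_contra hcon
  push_neg at hcon
  set x : ℕ → ℝ := fun n => (f^[n] p).1 with hxdef
  set y : ℕ → ℝ := fun n => (f^[n] p).2 with hydef
  -- every iterate stays in E1
  have hmem : ∀ n, k ≤ x n ∧ x n ≤ u1 ∧ y n < w1 := by
    intro n
    rcases Nat.eq_zero_or_pos n with h0 | h1
    · subst h0
      rw [hE1] at hp
      simpa [hxdef, hydef] using hp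
    · have := hcon n h1
      rw [hE1] at this
      simpa using this
  -- recurrences
  have hstep : ∀ n, f^[n+1] p = f (f^[n] p) := fun n =>
    Function.iterate_succ_apply' f n p
  have hxa : ∀ n, x (n+1) = (x n) ^ 2 * Real.exp (y n - x n) + k := by
    intro n
    simp only [hxdef, hydef, hstep n, hf (f^[n] p)]
  have hya : ∀ n, y (n+1) = a * y n - b * x n + c := by
    intro n
    simp only [hxdef, hydef, hstep n, hf (f^[n] p)]
  -- k < u1 and w1 < v
  have hkup : k < u1 := by
    have : 0 < 4 / Real.exp 2 * Real.exp v := by positivity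
    rw [hu1]; linarith
  have hw1v : w1 < v := by
    rw [hw1, hv]
    have hnum : c - b * u1 < c - b * k := by nlinarith
    exact div_lt_div_of_pos_right hnum h1a
  -- the gap D
  set D : ℝ := u1 - (4 / Real.exp 2 * Real.exp w1 + k) with hD
  have hDpos : 0 < D := by
    have : Real.exp w1 < Real.exp v := Real.exp_lt_exp.2 hw1v
    have he2 : 0 < 4 / Real.exp 2 := by positivity
    rw [hD, hu1]
    nlinarith
  -- bound on x (n+1)
  have hxbound : ∀ n, x (n+1) ≤ u1 - D := by
    intro n
    obtain ⟨hk1, hk2, hk3⟩ := hmem n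
    have hx0 : 0 ≤ x n := le_trans hk.le hk1
    have key : (x n) ^ 2 * Real.exp (y n - x n) ≤ 4 / Real.exp 2 * Real.exp w1 := by
      have e1 : Real.exp (y n - x n) = Real.exp (-(x n)) * Real.exp (y n) := by
        rw [← Real.exp_add]; ring_nf
      have e2 : (x n) ^ 2 * Real.exp (-(x n)) ≤ 4 * Real.exp (-2) :=
        sq_exp_neg_le (x n) hx0
      have e3 : Real.exp (y n) ≤ Real.exp w1 := Real.exp_le_exp.2 hk3.le
      have e4 : (4:ℝ) * Real.exp (-2) = 4 / Real.exp 2 := by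
        rw [Real.exp_neg]; ring
      calc (x n) ^ 2 * Real.exp (y n - x n)
          = ((x n) ^ 2 * Real.exp (-(x n))) * Real.exp (y n) := by rw [e1]; ring
        _ ≤ (4 * Real.exp (-2)) * Real.exp w1 := by
            apply mul_le_mul e2 e3 (Real.exp_pos _).le (by positivity)
        _ = 4 / Real.exp 2 * Real.exp w1 := by rw [e4]
    rw [hxa n, hD]
    linarith
  -- exact recurrence for the y-gap
  have hcval : c = (1 - a) * w1 + b * u1 := by
    rw [hw1]; field_simp; ring
  have hgap : ∀ n, w1 - y (n+1) = a * (w1 - y n) - b * (u1 - x n) := by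
    intro n
    rw [hya n]
    nlinarith [hcval]
  -- geometric decay of the y-gap
  have hgeo : ∀ n, w1 - y (n+1) ≤ a ^ n * (w1 - y 1) := by
    intro n
    induction n with
    | zero => simp
    | succ m ih =>
      have h1 : w1 - y (m+2) = a * (w1 - y (m+1)) - b * (u1 - x (m+1)) := hgap (m+1)
      have h2 : 0 ≤ b * (u1 - x (m+1)) := by
        have := (hmem (m+1)).2.1
        nlinarith
      have h3 : a * (w1 - y (m+1)) ≤ a * (a ^ m * (w1 - y 1)) :=
        mul_le_mul_of_nonneg_left ih ha0.le
      calc w1 - y (m+2) ≤ a * (w1 - y (m+1)) := by linarith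
        _ ≤ a * (a ^ m * (w1 - y 1)) := h3
        _ = a ^ (m+1) * (w1 - y 1) := by ring
  -- set up the contradiction
  set M : ℝ := w1 - y 1 with hM
  have hMpos : 0 < M := by
    have := (hmem 1).2.2
    rw [hM]; linarith
  -- lower bound: b*D ≤ a * (w1 - y n) for all n ≥ 1
  have hlow : ∀ n, b * D ≤ a * (w1 - y (n+1)) := by
    intro n
    have h1 : w1 - y (n+2) = a * (w1 - y (n+1)) - b * (u1 - x (n+1)) := hgap (n+1)
    have h2 : 0 < w1 - y (n+2) := by have := (hmem (n+2)).2.2; linarith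
    have h3 : x (n+1) ≤ u1 - D := hxbound n
    have h4 : b * D ≤ b * (u1 - x (n+1)) := by nlinarith
    linarith
  -- choose N with a^N * M < b*D
  obtain ⟨N, hN⟩ := exists_pow_lt_of_lt_one (show (0:ℝ) < b * D / M by positivity) ha1
  have hN' : a ^ N * M < b * D := by
    have := mul_lt_mul_of_pos_right hN hMpos
    rwa [div_mul_cancel₀] at this
    exact hMpos.ne'
  have hchain : a * (w1 - y (N+1)) ≤ a ^ N * M := by
    have h1 : w1 - y (N+1) ≤ a ^ N * M := hgeo N
    have h2 : 0 < w1 - y (N+1) := by have := (hmem (N+1)).2.2; linarith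
    nlinarith
  have := hlow N
  linarith
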